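/- Let V ≥ 3, z : Fin V → ℝ, y₁ ≠ y₂ in Fin V, η' > 0, π = σ(z), Δπ = π_{y₁} + π_{y₂}, and suppose π_{y₁} > π_{y₂}. Define the REINFORCE-updated logits z'_j = z_j − η'·Δπ·π_j for j ∉ {y₁, y₂} and z'_j = z_j − η'·(Δπ − 1)·π_j for j ∈ {y₁, y₂}, and let π' = σ(z'). Then π'_{y₁} > π_{y₁}: the probability of the higher-likelihood rewarded action strictly increases after one REINFORCE step. -/

import Mathlib

/-- The softmax distribution `σ(z)_i = exp(z_i) / ∑_j exp(z_j)`. -/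
noncomputable def softmax {V : ℕ} (z : Fin V → ℝ) (i : Fin V) : ℝ :=
  Real.exp (z i) / ∑ j, Real.exp (z j)

/-- Winner-take-all: if `π_{y₁} > π_{y₂}` are the two rewarded actions, then after one
REINFORCE step the probability of the higher-likelihood rewarded action strictly
increases: `π'_{y₁} > π_{y₁}`. -/
theorem reinforce_winner_increases {V : ℕ} (hV : 3 ≤ V) (z : Fin V → ℝ)
    (y₁ y₂ : Fin V) (hy : y₁ ≠ y₂) (η' : ℝ) (hη : 0 < η')
    (hπ : softmax z y₂ < softmax z y₁) :
    let π := softmax z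
    let Δπ := π y₁ + π y₂
    let z' : Fin V → ℝ := fun j =>
      if j = y₁ ∨ j = y₂ then z j - η' * ((Δπ - 1) * π j) else z j - η' * (Δπ * π j)
    softmax z y₁ < softmax z' y₁ := by
  intro π Δπ z'
  have hS : 0 < ∑ j, Real.exp (z j) :=
    Finset.sum_pos (fun j _ => Real.exp_pos _) ⟨y₁, Finset.mem_univ _⟩
  have hπpos : ∀ j, 0 < π j := fun j => div_pos (Real.exp_pos _) hS
  obtain ⟨k, hk1, hk2⟩ : ∃ k : Fin V, k ≠ y₁ ∧ k ≠ y₂ := by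
    by_contra h
    push_neg at h
    have hsub : (Finset.univ : Finset (Fin V)) ⊆ {y₁, y₂} := by
      intro x _
      simp only [Finset.mem_insert, Finset.mem_singleton]
      by_cases hx : x = y₁
      · exact Or.inl hx
      · exact Or.inr (h x hx)
    have hc := Finset.card_le_card hsub
    have h2 : ({y₁, y₂} : Finset (Fin V)).card ≤ 2 :=
      (Finset.card_insert_le _ _).trans (by simp)
    simp only [Finset.card_univ, Fintype.card_fin] at hc
    omega
  have hΔ1 : Δπ < 1 := by
    have hlt : Real.exp (z y₁) + Real.exp (z y₂) < ∑ j, Real.exp (z j) := by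
      have := Finset.sum_lt_sum_of_subset (s := ({y₁, y₂} : Finset (Fin V)))
        (t := Finset.univ) (f := fun j => Real.exp (z j)) (Finset.subset_univ _)
        (Finset.mem_univ k) (by simp [hk1, hk2]) (Real.exp_pos _)
        (fun j _ _ => (Real.exp_pos _).le)
      rwa [Finset.sum_pair hy] at this
    show π y₁ + π y₂ < 1
    simp only [π, softmax]
    rw [← add_div, div_lt_one hS]
    exact hlt
  have hΔ0 : 0 < Δπ := add_pos (hπpos y₁) (hπpos y₂)
  have hz'1 : z' y₁ = z y₁ - η' * ((Δπ - 1) * π y₁) := by simp [z']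
  have key : ∀ j : Fin V,
      Real.exp (z y₁) * Real.exp (z' j) ≤ Real.exp (z' y₁) * Real.exp (z j) := by
    intro j
    rw [← Real.exp_add, ← Real.exp_add, Real.exp_le_exp, hz'1]
    by_cases hj : j = y₁ ∨ j = y₂
    · have hz'j : z' j = z j - η' * ((Δπ - 1) * π j) := by simp [z', hj]
      rw [hz'j]
      have hπj : π j ≤ π y₁ := by
        rcases hj with h | h
        · subst h; exact le_refl _
        · subst h; exact hπ.le
      nlinarith [mul_pos hη (sub_pos.mpr hΔ1), hπpos j, hπpos y₁]
    · have hz'j : z' j = z j - η' * (Δπ * π j) := by simp [z', hj]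
      rw [hz'j]
      nlinarith [mul_pos (mul_pos hη hΔ0) (hπpos j),
        mul_pos (mul_pos hη (sub_pos.mpr hΔ1)) (hπpos y₁)]
  have keystrict :
      Real.exp (z y₁) * Real.exp (z' y₂) < Real.exp (z' y₁) * Real.exp (z y₂) := by
    rw [← Real.exp_add, ← Real.exp_add, Real.exp_lt_exp, hz'1]
    have hz'2 : z' y₂ = z y₂ - η' * ((Δπ - 1) * π y₂) := by simp [z']
    rw [hz'2]
    nlinarith [mul_pos hη (sub_pos.mpr hΔ1), hπ]
  have hS' : 0 < ∑ j, Real.exp (z' j) :=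
    Finset.sum_pos (fun j _ => Real.exp_pos _) ⟨y₁, Finset.mem_univ _⟩
  show Real.exp (z y₁) / ∑ j, Real.exp (z j) < Real.exp (z' y₁) / ∑ j, Real.exp (z' j)
  rw [div_lt_div_iff₀ hS hS', Finset.mul_sum, Finset.mul_sum]
  exact Finset.sum_lt_sum (fun j _ => key j) ⟨y₂, Finset.mem_univ _, keystrict⟩
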